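/- Let α = cos(θ/2)/(4 sin(θ/2)) with θ = 2π/k for an even integer k ≥ 4, let f(ℓ) = (√π/(ℓ√(2α))) · exp(−αℓ²/2) · erf(ℓ√(α/2)) and p(ℓ) = 2αℓ·exp(−αℓ²). Then ∫₀^∞ p(ℓ)·f(ℓ) dℓ = π√3/9. -/

import Mathlib

open Real MeasureTheory

open Set in
/-- Gaussian moment: `∫₀^∞ u e^{-cu²} = 1/(2c)`. -/
lemma aux_gauss_moment {c : ℝ} (hc : 0 < c) :
    ∫ u in Ioi (0:ℝ), u * Real.exp (-(c * u ^ 2)) = (2 * c)⁻¹ := by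
  have h := integral_Ioi_of_hasDerivAt_of_tendsto
      (f := fun u : ℝ => -(2 * c)⁻¹ * Real.exp (-(c * u ^ 2)))
      (f' := fun u : ℝ => u * Real.exp (-(c * u ^ 2))) (a := 0) (m := 0)
      ?_ ?_ ?_ ?_
  · rw [h]; norm_num
  · exact (Continuous.continuousWithinAt (by fun_prop))
  · intro x _
    have h1 : HasDerivAt (fun u : ℝ => -(c * u ^ 2)) (-(c * (2 * x))) x := by
      exact (((hasDerivAt_pow 2 x).const_mul c).neg).congr_deriv (by simp)
    have := ((h1.exp).const_mul (-(2 * c)⁻¹))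
    refine this.congr_deriv ?_
    field_simp
  · have : Integrable (fun u : ℝ => u * Real.exp (-c * u ^ 2)) := by
      exact integrable_mul_exp_neg_mul_sq hc
    refine (this.integrableOn).congr_fun (fun x _ => by ring_nf) measurableSet_Ioi
  · have hsq' : Filter.Tendsto (fun u : ℝ => c * u ^ 2) Filter.atTop Filter.atTop :=
      (Filter.tendsto_pow_atTop two_ne_zero).const_mul_atTop hc
    have h2 : Filter.Tendsto (fun u : ℝ => -(c * u ^ 2)) Filter.atTop Filter.atBot :=
      Filter.tendsto_neg_atBot_iff.mpr hsq'
    have := (Real.tendsto_exp_atBot.comp h2).const_mul (-(2 * c)⁻¹)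
    simpa using this

/-- `∫₀¹ ds/(2(3+s²)) = π√3/36`. -/
lemma aux_arctan : ∫ s in (0:ℝ)..1, (2 * (3 + s ^ 2))⁻¹ = π * Real.sqrt 3 / 36 := by
  have hs3 : (0:ℝ) < Real.sqrt 3 := Real.sqrt_pos.mpr (by norm_num)
  have hsq : Real.sqrt 3 ^ 2 = 3 := Real.sq_sqrt (by norm_num)
  have key : ∀ x : ℝ, HasDerivAt (fun s : ℝ => (2 * Real.sqrt 3)⁻¹ * Real.arctan (s / Real.sqrt 3))
      ((2 * (3 + x ^ 2))⁻¹) x := by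
    intro x
    have h1 : HasDerivAt (fun s : ℝ => s / Real.sqrt 3) ((Real.sqrt 3)⁻¹) x := by
      simpa using (hasDerivAt_id x).div_const (Real.sqrt 3)
    have h2 := (Real.hasDerivAt_arctan (x / Real.sqrt 3)).comp x h1
    have h3 := h2.const_mul ((2 * Real.sqrt 3)⁻¹)
    refine h3.congr_deriv ?_
    symm
    have h4 : (1 + (x / Real.sqrt 3) ^ 2) = (3 + x ^ 2) / 3 := by
      rw [div_pow, hsq]; field_simp
    rw [h4]
    field_simp
    ring_nf
    nlinarith [hsq, hs3]
  have hint : IntervalIntegrable (fun x : ℝ => (2 * (3 + x ^ 2))⁻¹) volume 0 1 := by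
    apply Continuous.intervalIntegrable
    apply Continuous.inv₀ (by fun_prop)
    intro x; positivity
  rw [intervalIntegral.integral_eq_sub_of_hasDerivAt (fun x _ => key x) hint]
  have harc : Real.arctan (1 / Real.sqrt 3) = π / 6 := by
    rw [← Real.tan_pi_div_six, Real.arctan_tan (by linarith [Real.pi_pos])
      (by linarith [Real.pi_pos])]
  simp only [zero_div, Real.arctan_zero, mul_zero, sub_zero]
  rw [harc]
  field_simp
  nlinarith [hsq, hs3, Real.pi_pos]

open Set in
/-- Core integral: `∫₀^∞ e^{-3u²} (∫₀^u e^{-z²} dz) du = π√3/36`. -/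
lemma aux_core :
    ∫ u in Ioi (0:ℝ), Real.exp (-(3 * u ^ 2)) * ∫ z in (0:ℝ)..u, Real.exp (-(z ^ 2))
      = π * Real.sqrt 3 / 36 := by
  -- rewrite integrand as double integral
  have step1 : ∀ u ∈ Ioi (0:ℝ),
      Real.exp (-(3 * u ^ 2)) * ∫ z in (0:ℝ)..u, Real.exp (-(z ^ 2))
        = ∫ s in Ioc (0:ℝ) 1, u * Real.exp (-((3 + s ^ 2) * u ^ 2)) := by
    intro u hu
    have hu0 : u ≠ 0 := ne_of_gt hu
    have hsub : (∫ s in (0:ℝ)..1, Real.exp (-((u * s) ^ 2)))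
        = u⁻¹ • ∫ z in (0:ℝ)..u, Real.exp (-(z ^ 2)) := by
      have := intervalIntegral.integral_comp_mul_left
        (f := fun z : ℝ => Real.exp (-(z ^ 2))) (a := 0) (b := 1) (c := u) hu0
      simpa using this
    have h2 : (∫ z in (0:ℝ)..u, Real.exp (-(z ^ 2)))
        = u * ∫ s in (0:ℝ)..1, Real.exp (-((u * s) ^ 2)) := by
      rw [hsub, smul_eq_mul, ← mul_assoc, mul_inv_cancel₀ hu0, one_mul]
    rw [h2, ← intervalIntegral.integral_of_le (by norm_num : (0:ℝ) ≤ 1)]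
    rw [← mul_assoc, mul_comm (Real.exp _) u, mul_assoc,
      ← intervalIntegral.integral_const_mul, ← intervalIntegral.integral_const_mul]
    congr 1 with s
    rw [← Real.exp_add]
    ring_nf
  rw [setIntegral_congr_fun measurableSet_Ioi step1]
  -- Fubini
  have hmeas : AEStronglyMeasurable
      (fun p : ℝ × ℝ => p.1 * Real.exp (-((3 + p.2 ^ 2) * p.1 ^ 2)))
      ((volume.restrict (Ioi (0:ℝ))).prod (volume.restrict (Ioc (0:ℝ) 1))) :=
    (Continuous.aestronglyMeasurable (by fun_prop))
  have hmaj : Integrable (fun p : ℝ × ℝ => p.1 * Real.exp (-(3 * p.1 ^ 2)))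
      ((volume.restrict (Ioi (0:ℝ))).prod (volume.restrict (Ioc (0:ℝ) 1))) := by
    have h1 : IntegrableOn (fun u : ℝ => u * Real.exp (-(3 * u ^ 2))) (Ioi (0:ℝ)) :=
      ((integrable_mul_exp_neg_mul_sq (by norm_num : (0:ℝ) < 3)).integrableOn).congr_fun
        (fun x _ => by simp only [neg_mul]) measurableSet_Ioi
    have h2 : Integrable (fun _ : ℝ => (1:ℝ)) (volume.restrict (Ioc (0:ℝ) 1)) := by
      apply integrable_const
    simpa using h1.mul_prod h2
  have hint : Integrable
      (fun p : ℝ × ℝ => p.1 * Real.exp (-((3 + p.2 ^ 2) * p.1 ^ 2)))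
      ((volume.restrict (Ioi (0:ℝ))).prod (volume.restrict (Ioc (0:ℝ) 1))) := by
    refine hmaj.mono hmeas ?_
    rw [Measure.prod_restrict]
    refine (ae_restrict_iff' (measurableSet_Ioi.prod measurableSet_Ioc)).mpr
      (Filter.Eventually.of_forall ?_)
    rintro ⟨u, s⟩ ⟨hu, _⟩
    simp only [norm_mul, Real.norm_eq_abs]
    have hu0 : (0:ℝ) < u := hu
    rw [abs_of_pos hu0, Real.abs_exp, Real.abs_exp]
    apply mul_le_mul_of_nonneg_left _ hu0.le
    apply Real.exp_le_exp.mpr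
    nlinarith [sq_nonneg s, sq_nonneg u]
  have := MeasureTheory.integral_integral_swap
    (f := fun u s : ℝ => u * Real.exp (-((3 + s ^ 2) * u ^ 2)))
    (μ := volume.restrict (Ioi (0:ℝ))) (ν := volume.restrict (Ioc (0:ℝ) 1)) hint
  rw [this]
  have inner : ∀ s : ℝ, (∫ u in Ioi (0:ℝ), u * Real.exp (-((3 + s ^ 2) * u ^ 2)))
      = (2 * (3 + s ^ 2))⁻¹ := fun s =>
    aux_gauss_moment (by positivity)
  rw [integral_congr_ae (Filter.Eventually.of_forall fun s => inner s)]
  rw [← intervalIntegral.integral_of_le (by norm_num : (0:ℝ) ≤ 1)]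
  exact aux_arctan

/-- For even k ≥ 4, with θ = 2π/k, α = cos(θ/2)/(4 sin(θ/2)),
f(ℓ) = (√π/(ℓ√(2α)))·exp(−αℓ²/2)·erf(ℓ√(α/2)) and p(ℓ) = 2αℓ·exp(−αℓ²),
we have ∫₀^∞ p(ℓ)·f(ℓ) dℓ = π√3/9. -/
theorem stmt_1 (k : ℕ) (hk : 4 ≤ k) (hke : Even k) :
    let θ : ℝ := 2 * π / k
    let α : ℝ := Real.cos (θ / 2) / (4 * Real.sin (θ / 2))
    (∫ ℓ in Set.Ioi (0:ℝ),
        (2 * α * ℓ * Real.exp (-(α * ℓ ^ 2))) *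
        ((Real.sqrt π / (ℓ * Real.sqrt (2 * α))) * Real.exp (-(α * ℓ ^ 2 / 2)) *
          ((2 / Real.sqrt π) *
            ∫ z in (0:ℝ)..(ℓ * Real.sqrt (α / 2)), Real.exp (-(z ^ 2)))))
      = π * Real.sqrt 3 / 9 := by
  intro θ α
  have hkr : (4:ℝ) ≤ (k:ℝ) := by exact_mod_cast hk
  have hkpos : (0:ℝ) < (k:ℝ) := by linarith
  have hθ2 : θ / 2 = π / k := by simp only [θ]; ring
  have h1 : 0 < π / k := by positivity
  have h2 : π / (k:ℝ) < π / 2 := by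
    rw [div_lt_div_iff₀ hkpos (by norm_num)]
    nlinarith [Real.pi_pos]
  have hcos : 0 < Real.cos (π / k) :=
    Real.cos_pos_of_mem_Ioo ⟨by linarith, h2⟩
  have hsin : 0 < Real.sin (π / k) :=
    Real.sin_pos_of_pos_of_lt_pi h1 (by linarith [Real.pi_pos])
  have hα : 0 < α := by
    simp only [α, hθ2]
    positivity
  clear_value θ α
  set c : ℝ := Real.sqrt (α / 2) with hc_def
  have hc : 0 < c := Real.sqrt_pos.mpr (by positivity)
  have hc2 : c ^ 2 = α / 2 := Real.sq_sqrt (by positivity)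
  have hπ : (0:ℝ) < Real.sqrt π := Real.sqrt_pos.mpr Real.pi_pos
  have h2α : (0:ℝ) < Real.sqrt (2 * α) := Real.sqrt_pos.mpr (by positivity)
  have h2a : Real.sqrt (2 * α) * Real.sqrt (2 * α) = 2 * α :=
    Real.mul_self_sqrt (by positivity)
  -- pointwise simplification
  have step1 : ∀ ℓ ∈ Set.Ioi (0:ℝ),
      (2 * α * ℓ * Real.exp (-(α * ℓ ^ 2))) *
        ((Real.sqrt π / (ℓ * Real.sqrt (2 * α))) * Real.exp (-(α * ℓ ^ 2 / 2)) *
          ((2 / Real.sqrt π) *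
            ∫ z in (0:ℝ)..(ℓ * Real.sqrt (α / 2)), Real.exp (-(z ^ 2))))
      = (fun u : ℝ => 2 * Real.sqrt (2 * α) *
          (Real.exp (-(3 * u ^ 2)) * ∫ z in (0:ℝ)..u, Real.exp (-(z ^ 2)))) (c * ℓ) := by
    intro ℓ hℓ
    have hℓ0 : (0:ℝ) < ℓ := hℓ
    simp only []
    rw [show ℓ * Real.sqrt (α / 2) = c * ℓ from mul_comm _ _]
    rw [show -(3 * (c * ℓ) ^ 2) = -(α * ℓ ^ 2) + -(α * ℓ ^ 2 / 2) by
      rw [mul_pow, hc2]; ring, Real.exp_add]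
    have hcoef : 2 * α * ℓ * (Real.sqrt π / (ℓ * Real.sqrt (2 * α)) * (2 / Real.sqrt π))
        = 2 * Real.sqrt (2 * α) := by
      have h2b : Real.sqrt 2 * Real.sqrt α * (Real.sqrt 2 * Real.sqrt α) = 2 * α := by
        have e1 : Real.sqrt 2 * Real.sqrt 2 = 2 := Real.mul_self_sqrt (by norm_num)
        have e2 : Real.sqrt α * Real.sqrt α = α := Real.mul_self_sqrt hα.le
        calc Real.sqrt 2 * Real.sqrt α * (Real.sqrt 2 * Real.sqrt α)
            = (Real.sqrt 2 * Real.sqrt 2) * (Real.sqrt α * Real.sqrt α) := by ring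
          _ = 2 * α := by rw [e1, e2]
      field_simp
      linear_combination (-1) * h2a
    calc 2 * α * ℓ * Real.exp (-(α * ℓ ^ 2)) *
          (Real.sqrt π / (ℓ * Real.sqrt (2 * α)) * Real.exp (-(α * ℓ ^ 2 / 2)) *
            (2 / Real.sqrt π * ∫ z in (0:ℝ)..(c * ℓ), Real.exp (-(z ^ 2))))
        = (2 * α * ℓ * (Real.sqrt π / (ℓ * Real.sqrt (2 * α)) * (2 / Real.sqrt π))) *
            (Real.exp (-(α * ℓ ^ 2)) * Real.exp (-(α * ℓ ^ 2 / 2)) *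
              ∫ z in (0:ℝ)..(c * ℓ), Real.exp (-(z ^ 2))) := by ring
      _ = 2 * Real.sqrt (2 * α) *
            (Real.exp (-(α * ℓ ^ 2)) * Real.exp (-(α * ℓ ^ 2 / 2)) *
              ∫ z in (0:ℝ)..(c * ℓ), Real.exp (-(z ^ 2))) := by rw [hcoef]
      _ = _ := by ring
  rw [MeasureTheory.setIntegral_congr_fun measurableSet_Ioi step1]
  rw [MeasureTheory.integral_comp_mul_left_Ioi
      (fun u : ℝ => 2 * Real.sqrt (2 * α) *
        (Real.exp (-(3 * u ^ 2)) * ∫ z in (0:ℝ)..u, Real.exp (-(z ^ 2)))) 0 hc]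
  rw [mul_zero, MeasureTheory.integral_const_mul, aux_core, smul_eq_mul]
  have hsplit : Real.sqrt (2 * α) = 2 * c := by
    rw [hc_def, show (2:ℝ) * α = 2 ^ 2 * (α / 2) by ring,
      Real.sqrt_mul (by norm_num : (0:ℝ) ≤ 2 ^ 2), Real.sqrt_sq (by norm_num : (0:ℝ) ≤ 2)]
  rw [hsplit]
  field_simp
  ring
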